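/- Let d ≥ 1, let X ⊆ ℝ^d be a closed set, let p₁, p₂ ∈ X, let q be a point on the straight-line segment between p₁ and p₂, and suppose there is ε > 0 such that the open ball B(q, ε) is disjoint from X (so in particular q ∉ X, hence q ≠ p₁, q ≠ p₂, and p₁ ≠ p₂). Let α be the affine line through p₁ and p₂. Then for every r with 0 ≤ r < ε, both p₁ and p₂ belong to the tubular sublevel set X_{τ_α,r} = {x ∈ X : dist(x, α) ≤ r}, but there is no continuous path from p₁ to p₂ lying entirely inside X_{τ_α,r}. -/

import Mathlib

open Metric Set


/-- Concave direction of the tubular-filtration theorem: if `X ⊆ ℝ^d` is closed,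
`p₁, p₂ ∈ X`, `q` lies on the segment between them, and an open ball `B(q, ε)` is
disjoint from `X`, then for the line `α` through `p₁` and `p₂` and any `0 ≤ r < ε`,
both `p₁` and `p₂` lie in the tubular sublevel set `{x ∈ X | dist(x, α) ≤ r}`, but
they cannot be joined by a continuous path inside it. -/
theorem not_joinedIn_tubular_sublevel
    (d : ℕ) (hd : 1 ≤ d) (X : Set (EuclideanSpace ℝ (Fin d))) (hXclosed : IsClosed X)
    (p₁ p₂ q : EuclideanSpace ℝ (Fin d)) (hp₁ : p₁ ∈ X) (hp₂ : p₂ ∈ X)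
    (hq : q ∈ segment ℝ p₁ p₂) (ε : ℝ) (hε : 0 < ε)
    (hball : Metric.ball q ε ∩ X = ∅) (r : ℝ) (hr0 : 0 ≤ r) (hrε : r < ε) :
    (p₁ ∈ {x ∈ X |
        Metric.infDist x ((affineSpan ℝ {p₁, p₂} : AffineSubspace ℝ
          (EuclideanSpace ℝ (Fin d))) : Set (EuclideanSpace ℝ (Fin d))) ≤ r}) ∧
    (p₂ ∈ {x ∈ X |
        Metric.infDist x ((affineSpan ℝ {p₁, p₂} : AffineSubspace ℝ
          (EuclideanSpace ℝ (Fin d))) : Set (EuclideanSpace ℝ (Fin d))) ≤ r}) ∧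
    ¬ JoinedIn {x ∈ X |
        Metric.infDist x ((affineSpan ℝ {p₁, p₂} : AffineSubspace ℝ
          (EuclideanSpace ℝ (Fin d))) : Set (EuclideanSpace ℝ (Fin d))) ≤ r} p₁ p₂ := by
  set α : Set (EuclideanSpace ℝ (Fin d)) :=
    ((affineSpan ℝ {p₁, p₂} : AffineSubspace ℝ (EuclideanSpace ℝ (Fin d))) :
      Set (EuclideanSpace ℝ (Fin d))) with hα
  have hp₁α : p₁ ∈ α := subset_affineSpan ℝ _ (by simp)
  have hp₂α : p₂ ∈ α := subset_affineSpan ℝ _ (by simp)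
  have hqX : q ∉ X := by
    intro h
    have : q ∈ Metric.ball q ε ∩ X := ⟨Metric.mem_ball_self hε, h⟩
    simp [hball] at this
  have hmem₁ : Metric.infDist p₁ α ≤ r := by
    rw [Metric.infDist_zero_of_mem hp₁α]; exact hr0
  have hmem₂ : Metric.infDist p₂ α ≤ r := by
    rw [Metric.infDist_zero_of_mem hp₂α]; exact hr0
  refine ⟨⟨hp₁, hmem₁⟩, ⟨hp₂, hmem₂⟩, ?_⟩
  rintro ⟨γ, hγ⟩
  obtain ⟨a, b, ha, hb, hab, hqeq⟩ := hq
  have hq' : q = p₁ + b • (p₂ - p₁) := by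
    have : a = 1 - b := by linarith
    rw [← hqeq, this]
    module
  have hbpos : 0 < b := by
    rcases lt_or_eq_of_le hb with h | h
    · exact h
    · exfalso; apply hqX; rw [hq', ← h]; simpa using hp₁
  have hapos : 0 < a := by
    rcases lt_or_eq_of_le ha with h | h
    · exact h
    · exfalso; apply hqX
      have hb1 : b = 1 := by linarith
      rw [← hqeq, ← h, hb1]
      simpa using hp₂
  have hne : p₁ ≠ p₂ := by
    intro h
    apply hqX
    rw [hq', ← h]
    simpa using hp₁
  have hnorm : (0:ℝ) < ‖p₂ - p₁‖ := by
    simpa [sub_eq_zero] using (norm_pos_iff.mpr (sub_ne_zero.mpr hne.symm))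
  -- the function along the path
  set g : unitInterval → ℝ := fun t => inner ℝ (γ t - q) (p₂ - p₁) with hg
  have hgc : Continuous g := Continuous.inner ((γ.continuous).sub continuous_const) continuous_const
  have hg0 : g 0 = -(b * ‖p₂ - p₁‖ ^ 2) := by
    simp only [hg, γ.source]
    rw [hq']
    have : p₁ - (p₁ + b • (p₂ - p₁)) = (-b) • (p₂ - p₁) := by module
    rw [this, real_inner_smul_left, real_inner_self_eq_norm_sq]
    ring
  have hg1 : g 1 = a * ‖p₂ - p₁‖ ^ 2 := by
    simp only [hg, γ.target]
    rw [hq']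
    have : p₂ - (p₁ + b • (p₂ - p₁)) = a • (p₂ - p₁) := by
      have : a = 1 - b := by linarith
      rw [this]; module
    rw [this, real_inner_smul_left, real_inner_self_eq_norm_sq]
  have h0mem : (0:ℝ) ∈ Set.Icc (g 0) (g 1) := by
    constructor
    · rw [hg0]; nlinarith
    · rw [hg1]; positivity
  obtain ⟨t, ht⟩ := intermediate_value_univ (0 : unitInterval) 1 hgc h0mem
  set z := γ t with hz
  have hzX : z ∈ X := (hγ t).1
  have hzr : Metric.infDist z α ≤ r := (hγ t).2
  -- q is the closest point: dist z q ≤ dist z y for all y ∈ α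
  have hle : dist z q ≤ Metric.infDist z α := by
    by_contra hcon
    push_neg at hcon
    obtain ⟨y, hy, hlt⟩ := (Metric.infDist_lt_iff ⟨p₁, hp₁α⟩).mp hcon
    have hge : dist z q ≤ dist z y := by
      have hy' : (y -ᵥ p₁) +ᵥ p₁ ∈ affineSpan ℝ {p₁, p₂} := by
        rw [vsub_vadd]; exact hy
      obtain ⟨s, hs⟩ := vadd_left_mem_affineSpan_pair.mp hy'
      simp only [vsub_eq_sub] at hs
      have hyq : y - q = (s - b) • (p₂ - p₁) := by
        have hy2 : y = s • (p₂ - p₁) + p₁ := by rw [hs]; abel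
        rw [hy2, hq']; module
      have horth : inner ℝ (z - q) (y - q) = (0:ℝ) := by
        rw [hyq, real_inner_smul_right]
        have : inner ℝ (z - q) (p₂ - p₁) = (0:ℝ) := ht
        rw [this]; ring
      have : dist z y ^ 2 = dist z q ^ 2 + dist q y ^ 2 := by
        have hzy : z - y = (z - q) - (y - q) := by abel
        rw [dist_eq_norm, dist_eq_norm, dist_eq_norm, hzy]
        rw [norm_sub_sq_real, horth]
        have : ‖y - q‖ = ‖q - y‖ := norm_sub_rev _ _
        rw [this]; ring
      nlinarith [dist_nonneg (x := z) (y := q), dist_nonneg (x := z) (y := y),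
        sq_nonneg (dist q y)]
    linarith
  have : z ∈ Metric.ball q ε ∩ X := by
    refine ⟨?_, hzX⟩
    rw [Metric.mem_ball]
    exact lt_of_le_of_lt (hle.trans hzr) hrε
  simp [hball] at this
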